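/- Let $\mu$ be the Gauss measure on $\mathbb{R}$ and $\beta_2>1$ a fixed constant. For every $m\in\mathbb{N}$ there exists a ball $B$ such that none of the balls $2^jB$, $j\in\{0,\dots,m\}$, is $(2,\beta_2)$-doubling; consequently $N^{(2)}_{B,\widetilde B^{2}}>m$, where $\widetilde B^{2}=2^{N}B$ with $N$ the smallest nonnegative integer making $2^NB$ $(2,\beta_2)$-doubling. In particular, the Gauss measure does not satisfy the $2$-weakly doubling condition. -/

import Mathlib

open MeasureTheory Metric Real

/-- The Gauss measure on `ℝ`, `dμ(x) = π^{-1/2} e^{-x²} dx`. -/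
noncomputable def gaussMeasure : Measure ℝ :=
  volume.withDensity (fun x => ENNReal.ofReal ((Real.sqrt Real.pi)⁻¹ * Real.exp (-x ^ 2)))

lemma gaussDensity_integrable :
    Integrable (fun t : ℝ => (Real.sqrt Real.pi)⁻¹ * Real.exp (-t ^ 2)) volume := by
  have h := (integrable_exp_neg_mul_sq (b := 1) one_pos).const_mul (Real.sqrt Real.pi)⁻¹
  simpa using h

lemma gauss_toReal (s : Set ℝ) (hs : MeasurableSet s) :
    (gaussMeasure s).toReal = ∫ t in s, (Real.sqrt Real.pi)⁻¹ * Real.exp (-t ^ 2) := by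
  rw [gaussMeasure, withDensity_apply _ hs,
    ← ofReal_integral_eq_lintegral_ofReal gaussDensity_integrable.integrableOn
      (Filter.Eventually.of_forall fun t => by positivity),
    ENNReal.toReal_ofReal]
  exact integral_nonneg fun t => by positivity

lemma gauss_key (β₂ X R : ℝ) (hβ : 0 < β₂) (hR : 0 < R) (hX : 2 * R ≤ X)
    (hd : Real.log (4 * β₂) < R * X - 5 / 4 * R ^ 2) :
    β₂ * (gaussMeasure (ball X R)).toReal < (gaussMeasure (ball X (2 * R))).toReal := by
  set c : ℝ := (Real.sqrt Real.pi)⁻¹ with hc_def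
  have hc : 0 < c := by
    rw [hc_def]
    exact inv_pos.mpr (Real.sqrt_pos.mpr Real.pi_pos)
  set f : ℝ → ℝ := fun t => c * Real.exp (-t ^ 2) with hf_def
  have hf : Integrable f volume := gaussDensity_integrable
  have hfnn : ∀ t, 0 ≤ f t := fun t => by positivity
  -- Upper bound for the small ball
  have hupper : (gaussMeasure (ball X R)).toReal ≤ 2 * R * (c * Real.exp (-(X - R) ^ 2)) := by
    rw [gauss_toReal _ measurableSet_ball, Real.ball_eq_Ioo]
    have h1 : (∫ t in Set.Ioo (X - R) (X + R), f t) ≤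
        ∫ _t in Set.Ioo (X - R) (X + R), c * Real.exp (-(X - R) ^ 2) := by
      apply setIntegral_mono_on hf.integrableOn (integrableOn_const (by
        rw [Real.volume_Ioo]; exact ENNReal.ofReal_ne_top) enorm_ne_top) measurableSet_Ioo
      intro t ht
      have h0 : 0 ≤ X - R := by linarith
      have ht2 : (X - R) ^ 2 ≤ t ^ 2 := by nlinarith [ht.1]
      exact mul_le_mul_of_nonneg_left (Real.exp_le_exp.mpr (by linarith)) hc.le
    calc (∫ t in Set.Ioo (X - R) (X + R), f t) ≤ _ := h1
      _ = 2 * R * (c * Real.exp (-(X - R) ^ 2)) := by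
          rw [setIntegral_const, Real.volume_real_Ioo_of_le (by linarith), smul_eq_mul]
          ring
  -- Lower bound for the big ball
  have hlower : R / 2 * (c * Real.exp (-(X - 3 / 2 * R) ^ 2)) ≤
      (gaussMeasure (ball X (2 * R))).toReal := by
    rw [gauss_toReal _ measurableSet_ball, Real.ball_eq_Ioo]
    have hsub : Set.Ioo (X - 2 * R) (X - 3 / 2 * R) ⊆ Set.Ioo (X - 2 * R) (X + 2 * R) :=
      Set.Ioo_subset_Ioo le_rfl (by linarith)
    have h2 : (∫ _t in Set.Ioo (X - 2 * R) (X - 3 / 2 * R),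
        c * Real.exp (-(X - 3 / 2 * R) ^ 2)) ≤
        ∫ t in Set.Ioo (X - 2 * R) (X - 3 / 2 * R), f t := by
      apply setIntegral_mono_on (integrableOn_const (by
        rw [Real.volume_Ioo]; exact ENNReal.ofReal_ne_top) enorm_ne_top) hf.integrableOn measurableSet_Ioo
      intro t ht
      have h0 : 0 ≤ X - 2 * R := by linarith
      have ht2 : t ^ 2 ≤ (X - 3 / 2 * R) ^ 2 := by nlinarith [ht.1, ht.2]
      exact mul_le_mul_of_nonneg_left (Real.exp_le_exp.mpr (by linarith)) hc.le
    have h3 : (∫ t in Set.Ioo (X - 2 * R) (X - 3 / 2 * R), f t) ≤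
        ∫ t in Set.Ioo (X - 2 * R) (X + 2 * R), f t :=
      setIntegral_mono_set hf.integrableOn
        (Filter.Eventually.of_forall fun t => hfnn t) (HasSubset.Subset.eventuallyLE hsub)
    calc R / 2 * (c * Real.exp (-(X - 3 / 2 * R) ^ 2))
        = ∫ _t in Set.Ioo (X - 2 * R) (X - 3 / 2 * R), c * Real.exp (-(X - 3 / 2 * R) ^ 2) := by
          rw [setIntegral_const, Real.volume_real_Ioo_of_le (by linarith), smul_eq_mul]
          ring
      _ ≤ _ := h2.trans h3
  -- Combine
  have hexp : 4 * β₂ < Real.exp (R * X - 5 / 4 * R ^ 2) := by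
    calc 4 * β₂ = Real.exp (Real.log (4 * β₂)) := (Real.exp_log (by linarith)).symm
      _ < _ := Real.exp_lt_exp.mpr hd
  have hE : Real.exp (-(X - 3 / 2 * R) ^ 2) =
      Real.exp (R * X - 5 / 4 * R ^ 2) * Real.exp (-(X - R) ^ 2) := by
    rw [← Real.exp_add]; ring_nf
  have hE1 : 0 < Real.exp (-(X - R) ^ 2) := Real.exp_pos _
  have key : β₂ * (2 * R * (c * Real.exp (-(X - R) ^ 2))) <
      R / 2 * (c * Real.exp (-(X - 3 / 2 * R) ^ 2)) := by
    rw [hE]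
    nlinarith [mul_pos (mul_pos hR hc) hE1]
  calc β₂ * (gaussMeasure (ball X R)).toReal
      ≤ β₂ * (2 * R * (c * Real.exp (-(X - R) ^ 2))) :=
        mul_le_mul_of_nonneg_left hupper hβ.le
    _ < R / 2 * (c * Real.exp (-(X - 3 / 2 * R) ^ 2)) := key
    _ ≤ _ := hlower

/-- For the Gauss measure and any fixed `β₂ > 1`: for every `m` there is a ball `B` such that
none of `2^j B`, `0 ≤ j ≤ m`, is `(2,β₂)`-doubling; consequently the number of dilations needed
to reach a `(2,β₂)`-doubling ball is unbounded, so the `2`-weakly doubling condition fails. -/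
theorem gaussMeasure_not_weakly_doubling (β₂ : ℝ) (hβ : 1 < β₂) :
    (∀ m : ℕ, ∃ (x r : ℝ), 0 < r ∧ ∀ j ≤ m,
      β₂ * (gaussMeasure (Metric.ball x ((2 : ℝ) ^ j * r))).toReal
        < (gaussMeasure (Metric.ball x ((2 : ℝ) ^ (j + 1) * r))).toReal) ∧
    ¬ ∃ C1 : ℕ, ∀ (x r : ℝ), 0 < r → ∃ N : ℕ, N ≤ C1 ∧
      (gaussMeasure (Metric.ball x ((2 : ℝ) ^ (N + 1) * r))).toReal
        ≤ β₂ * (gaussMeasure (Metric.ball x ((2 : ℝ) ^ N * r))).toReal := by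
  have hβ0 : 0 < β₂ := by linarith
  have hlog : 0 ≤ Real.log (4 * β₂) := Real.log_nonneg (by linarith)
  have main : ∀ m : ℕ, ∃ (x r : ℝ), 0 < r ∧ ∀ j ≤ m,
      β₂ * (gaussMeasure (Metric.ball x ((2 : ℝ) ^ j * r))).toReal
        < (gaussMeasure (Metric.ball x ((2 : ℝ) ^ (j + 1) * r))).toReal := by
    intro m
    refine ⟨4 * 2 ^ m + Real.log (4 * β₂) + 1, 1, one_pos, fun j hjm => ?_⟩
    have h2j1 : (1 : ℝ) ≤ 2 ^ j := one_le_pow₀ one_le_two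
    have h2jm : (2 : ℝ) ^ j ≤ 2 ^ m := pow_le_pow_right₀ one_le_two hjm
    have hr1 : (2 : ℝ) ^ j * 1 = 2 ^ j := mul_one _
    have hr2 : (2 : ℝ) ^ (j + 1) * 1 = 2 * 2 ^ j := by rw [mul_one, pow_succ]; ring
    rw [hr1, hr2]
    apply gauss_key β₂ _ _ hβ0 (by positivity)
    · nlinarith
    · nlinarith
  refine ⟨main, ?_⟩
  rintro ⟨C1, h⟩
  obtain ⟨x, r, hr, hx⟩ := main C1
  obtain ⟨N, hN, hle⟩ := h x r hr
  have := hx N hN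
  linarith
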